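/- Bounds on the maximal cosystole: Let X be a finite abstract simplicial complex and k ≥ 0 with f_k(X) > 0, and set f_{−1}(X) = 1. Let λ_k(X) = max{‖φ‖_csy : φ a k-cochain of X over Z/2}. Then (1 − 20·√(f_{k−1}(X)/f_k(X))) · f_k(X)/2 ≤ λ_k(X) ≤ f_k(X)/2. -/

import Mathlib

open Finset

section Simplicial

variable {V : Type*} [DecidableEq V]

/-- `X` is a finite abstract simplicial complex: a finite family of nonempty finite sets
closed under taking nonempty subsets. -/
def IsComplex (X : Finset (Finset V)) : Prop :=
  (∀ σ ∈ X, σ.Nonempty) ∧ ∀ σ ∈ X, ∀ τ ⊆ σ, τ.Nonempty → τ ∈ X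

/-- The `k`-dimensional faces of `X` (faces of cardinality `k+1`). -/
def faces (X : Finset (Finset V)) (k : ℕ) : Finset (Finset V) :=
  X.filter fun σ => σ.card = k + 1

/-- The support of a `k`-cochain. -/
def csupp (X : Finset (Finset V)) (k : ℕ) (φ : Finset V → ZMod 2) : Finset (Finset V) :=
  (faces X k).filter fun σ => φ σ ≠ 0

/-- The norm of a `k`-cochain. -/
def cnorm (X : Finset (Finset V)) (k : ℕ) (φ : Finset V → ZMod 2) : ℕ :=
  (csupp X k φ).card

/-- The coboundary of a `k`-cochain, as a `(k+1)`-cochain. -/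
def cob (X : Finset (Finset V)) (k : ℕ) (φ : Finset V → ZMod 2) : Finset V → ZMod 2 :=
  fun τ => ∑ σ ∈ (faces X k).filter (fun σ => σ ⊆ τ), φ σ

/-- The cosystolic norm of a `k`-cochain, with the reduced convention at `k = 0`. -/
noncomputable def cosys (X : Finset (Finset V)) (k : ℕ) (φ : Finset V → ZMod 2) : ℕ :=
  if k = 0 then
    min (cnorm X 0 φ) (cnorm X 0 fun σ => 1 + φ σ)
  else
    sInf {m | ∃ ψ : Finset V → ZMod 2, m = cnorm X k fun τ => φ τ + cob X (k - 1) ψ τ}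

/-- The `k`-th (coboundary) Cheeger constant, valued in `ℝ≥0∞` (`⊤` if no cochain has
positive cosystolic norm). -/
noncomputable def cheeger (X : Finset (Finset V)) (k : ℕ) : ENNReal :=
  sInf {r : ENNReal | ∃ φ : Finset V → ZMod 2, 0 < cosys X k φ ∧
    r = (cnorm X (k + 1) (cob X k φ) : ENNReal) / (cosys X k φ : ENNReal)}

/-- The boundary of a `k`-chain, as a `(k-1)`-chain. -/
def bdry (X : Finset (Finset V)) (k : ℕ) (c : Finset V → ZMod 2) : Finset V → ZMod 2 :=
  fun τ => ∑ σ ∈ (faces X k).filter (fun σ => τ ⊆ σ), c σ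

/-- A `k`-cycle, with the reduced convention at `k = 0`. -/
def IsCycle (X : Finset (Finset V)) (k : ℕ) (c : Finset V → ZMod 2) : Prop :=
  if k = 0 then ∑ σ ∈ faces X 0, c σ = 0
  else ∀ τ ∈ faces X (k - 1), bdry X k c τ = 0

/-- Evaluation of a `k`-cochain on a `k`-chain. -/
def eval (X : Finset (Finset V)) (k : ℕ) (φ c : Finset V → ZMod 2) : ZMod 2 :=
  ∑ σ ∈ faces X k, φ σ * c σ

end Simplicial

/-- `f_{k-1}(X)`, with the convention `f_{-1}(X) = 1`. -/
def fPrev {V : Type*} [DecidableEq V] (X : Finset (Finset V)) (k : ℕ) : ℕ :=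
  if k = 0 then 1 else (faces X (k - 1)).card

/-- The maximal norm of a `k`-cosystole of `X`. -/
noncomputable def maxCosys {V : Type*} [DecidableEq V]
    (X : Finset (Finset V)) (k : ℕ) : ℕ :=
  sSup {m | ∃ φ : Finset V → ZMod 2, m = cosys X k φ}


lemma zmod2_ne_zero_iff (x : ZMod 2) : x ≠ 0 ↔ x = 1 := by revert x; decide

lemma zmod2_flip (P : Prop) [Decidable P] :
    (if ¬ P then (1 : ZMod 2) else 0) = (if P then (1 : ZMod 2) else 0) + 1 := by
  by_cases h : P <;> simp [h] <;> decide

/-- Number of subsets of `F` with prescribed parity of intersection with a nonempty `N ⊆ F`. -/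
lemma zmod2_add_add (x : ZMod 2) : x + 1 + 1 = x := by revert x; decide

lemma parity_half {α : Type*} [DecidableEq α] (F N : Finset α) (hNF : N ⊆ F)
    (hne : N.Nonempty) (c : ZMod 2) :
    2 * (F.powerset.filter fun S => (∑ σ ∈ N, if σ ∈ S then (1 : ZMod 2) else 0) = c).card
      = 2 ^ F.card := by
  obtain ⟨σ0, hσ0⟩ := hne
  set g : Finset α → ZMod 2 := fun S => ∑ σ ∈ N, if σ ∈ S then (1 : ZMod 2) else 0 with hg
  have hflip : ∀ S : Finset α, g (symmDiff S {σ0}) = g S + 1 := by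
    intro S
    have h1 : ∀ σ ∈ N.erase σ0, (if σ ∈ symmDiff S {σ0} then (1 : ZMod 2) else 0)
        = (if σ ∈ S then (1 : ZMod 2) else 0) := by
      intro σ hσ
      have hne : σ ≠ σ0 := Finset.ne_of_mem_erase hσ
      have : σ ∈ symmDiff S {σ0} ↔ σ ∈ S := by
        simp [Finset.mem_symmDiff, hne]
      simp [this]
    have h0 : (if σ0 ∈ symmDiff S {σ0} then (1 : ZMod 2) else 0)
        = (if σ0 ∈ S then (1 : ZMod 2) else 0) + 1 := by
      have : σ0 ∈ symmDiff S {σ0} ↔ ¬ σ0 ∈ S := by simp [Finset.mem_symmDiff]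
      rw [if_congr this rfl rfl, zmod2_flip]
    rw [hg]
    simp only
    rw [← Finset.add_sum_erase _ _ hσ0, ← Finset.add_sum_erase _ _ hσ0, h0,
      Finset.sum_congr rfl h1]
    ring
  have hbij : ∀ c' : ZMod 2, (F.powerset.filter fun S => g S = c').card
      = (F.powerset.filter fun S => g S = c' + 1).card := by
    intro c'
    apply Finset.card_nbij' (fun S => symmDiff S {σ0}) (fun S => symmDiff S {σ0})
    · intro S hS
      simp only [Finset.mem_coe, Finset.mem_filter, Finset.mem_powerset] at hS ⊢
      constructor
      · intro x hx
        rcases Finset.mem_symmDiff.1 hx with ⟨h, _⟩ | ⟨h, _⟩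
        · exact hS.1 h
        · have hx0 := Finset.mem_singleton.1 h; subst hx0; exact hNF hσ0
      · rw [hflip, hS.2]
    · intro S hS
      simp only [Finset.mem_coe, Finset.mem_filter, Finset.mem_powerset] at hS ⊢
      constructor
      · intro x hx
        rcases Finset.mem_symmDiff.1 hx with ⟨h, _⟩ | ⟨h, _⟩
        · exact hS.1 h
        · have hx0 := Finset.mem_singleton.1 h; subst hx0; exact hNF hσ0
      · rw [hflip, hS.2, zmod2_add_add]
    · intro S _; exact symmDiff_symmDiff_cancel_right {σ0} S
    · intro S _; exact symmDiff_symmDiff_cancel_right {σ0} S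
  have hpart : (F.powerset.filter fun S => g S = c).card
      + (F.powerset.filter fun S => g S = c + 1).card = 2 ^ F.card := by
    have hneg : (F.powerset.filter fun S => ¬ g S = c) =
        (F.powerset.filter fun S => g S = c + 1) := by
      apply Finset.filter_congr
      intro S _
      have : ∀ x c : ZMod 2, ¬ x = c ↔ x = c + 1 := by decide
      exact this (g S) c
    rw [← hneg, Finset.card_filter_add_card_filter_not, Finset.card_powerset]
  have hbc := hbij c
  show 2 * (F.powerset.filter fun S => g S = c).card = 2 ^ F.card
  omega

section Aux

variable {V : Type*} [DecidableEq V]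

/-- indicator cochain of a set of faces -/
def indicC (S : Finset (Finset V)) : Finset V → ZMod 2 := fun σ => if σ ∈ S then 1 else 0

lemma exists_subface {X : Finset (Finset V)} (hX : IsComplex X) {k : ℕ} (hk : k ≠ 0)
    {τ : Finset V} (hτ : τ ∈ faces X k) : ∃ σ ∈ faces X (k - 1), σ ⊆ τ := by
  obtain ⟨hτX, hcard⟩ := Finset.mem_filter.1 hτ
  obtain ⟨v, hv⟩ := Finset.card_pos.1 (show 0 < τ.card by omega)
  refine ⟨τ.erase v, ?_, Finset.erase_subset _ _⟩
  have hc : (τ.erase v).card = k := by rw [Finset.card_erase_of_mem hv, hcard]; omega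
  have hne : (τ.erase v).Nonempty := Finset.card_pos.1 (by omega)
  exact Finset.mem_filter.2 ⟨hX.2 τ hτX _ (Finset.erase_subset _ _) hne, by omega⟩

lemma cosys_le_card (X : Finset (Finset V)) (k : ℕ) (φ : Finset V → ZMod 2) :
    cosys X k φ ≤ (faces X k).card := by
  unfold cosys
  split_ifs with h
  · subst h
    exact le_trans (min_le_left _ _) (Finset.card_filter_le _ _)
  · exact le_trans (Nat.sInf_le ⟨0, rfl⟩) (Finset.card_filter_le _ _)

lemma zmod2_ne_zero_iff' (a b : ZMod 2) : a + b ≠ 0 ↔ b = 1 + a := by revert a b; decide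

lemma zmod2_one_add (a : ZMod 2) : 1 + a ≠ 0 ↔ ¬ a ≠ 0 := by revert a; decide

lemma two_mul_cosys_le {X : Finset (Finset V)} (hX : IsComplex X) (k : ℕ)
    (φ : Finset V → ZMod 2) : 2 * cosys X k φ ≤ (faces X k).card := by
  by_cases hk : k = 0
  · subst hk
    rw [cosys, if_pos rfl]
    have hpar : cnorm X 0 φ + cnorm X 0 (fun σ => 1 + φ σ) = (faces X 0).card := by
      unfold cnorm csupp
      have h2 : ((faces X 0).filter fun σ => (1 + φ σ) ≠ 0)
          = ((faces X 0).filter fun σ => ¬ (φ σ ≠ 0)) :=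
        Finset.filter_congr fun σ _ => zmod2_one_add (φ σ)
      rw [h2, Finset.card_filter_add_card_filter_not]
    omega
  · rw [cosys, if_neg hk]
    have hkey : ∃ S ∈ (faces X (k-1)).powerset,
        2 * cnorm X k (fun τ => φ τ + cob X (k-1) (indicC S) τ) ≤ (faces X k).card := by
      by_contra hcon
      push_neg at hcon
      have hne : (faces X (k-1)).powerset.Nonempty := ⟨∅, Finset.empty_mem_powerset _⟩
      -- each τ contributes exactly half
      have htau : ∀ τ ∈ faces X k,
          2 * ((faces X (k-1)).powerset.filter
            (fun S => φ τ + cob X (k-1) (indicC S) τ ≠ 0)).card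
          = 2 ^ (faces X (k-1)).card := by
        intro τ hτ
        have hNsub : (faces X (k-1)).filter (fun σ => σ ⊆ τ) ⊆ faces X (k-1) :=
          Finset.filter_subset _ _
        have hNne : ((faces X (k-1)).filter (fun σ => σ ⊆ τ)).Nonempty := by
          obtain ⟨σ, hσ, hsub⟩ := exists_subface hX hk hτ
          exact ⟨σ, Finset.mem_filter.2 ⟨hσ, hsub⟩⟩
        have hp := parity_half (faces X (k-1)) ((faces X (k-1)).filter (fun σ => σ ⊆ τ))
          hNsub hNne (1 + φ τ)
        have heq : ((faces X (k-1)).powerset.filter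
              (fun S => φ τ + cob X (k-1) (indicC S) τ ≠ 0))
            = ((faces X (k-1)).powerset.filter
              (fun S => (∑ σ ∈ (faces X (k-1)).filter (fun σ => σ ⊆ τ),
                if σ ∈ S then (1 : ZMod 2) else 0) = 1 + φ τ)) := by
          apply Finset.filter_congr
          intro S _
          have : cob X (k-1) (indicC S) τ
              = ∑ σ ∈ (faces X (k-1)).filter (fun σ => σ ⊆ τ),
                if σ ∈ S then (1 : ZMod 2) else 0 := rfl
          rw [this]
          exact zmod2_ne_zero_iff' (φ τ) _
        rw [heq]
        exact hp
      -- sum it up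
      have hsum : ∑ S ∈ (faces X (k-1)).powerset,
          2 * cnorm X k (fun τ => φ τ + cob X (k-1) (indicC S) τ)
          = (faces X k).card * 2 ^ (faces X (k-1)).card := by
        have h1 : ∀ S : Finset (Finset V),
            cnorm X k (fun τ => φ τ + cob X (k-1) (indicC S) τ)
            = ∑ τ ∈ faces X k,
              if φ τ + cob X (k-1) (indicC S) τ ≠ 0 then 1 else 0 :=
          fun S => Finset.card_filter _ _
        calc ∑ S ∈ (faces X (k-1)).powerset,
              2 * cnorm X k (fun τ => φ τ + cob X (k-1) (indicC S) τ)
            = ∑ τ ∈ faces X k, 2 * ∑ S ∈ (faces X (k-1)).powerset,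
                (if φ τ + cob X (k-1) (indicC S) τ ≠ 0 then 1 else 0) := by
              simp_rw [h1, Finset.mul_sum]
              rw [Finset.sum_comm]
          _ = ∑ τ ∈ faces X k, 2 ^ (faces X (k-1)).card := by
              refine Finset.sum_congr rfl fun τ hτ => ?_
              rw [← Finset.card_filter]
              exact htau τ hτ
          _ = (faces X k).card * 2 ^ (faces X (k-1)).card := by
              rw [Finset.sum_const, smul_eq_mul]
      -- contradiction with hcon
      have hlb : ∀ S ∈ (faces X (k-1)).powerset,
          (faces X k).card + 1 ≤ 2 * cnorm X k (fun τ => φ τ + cob X (k-1) (indicC S) τ) :=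
        fun S hS => hcon S hS
      have hge : ((faces X k).card + 1) * 2 ^ (faces X (k-1)).card
          ≤ (faces X k).card * 2 ^ (faces X (k-1)).card := by
        calc ((faces X k).card + 1) * 2 ^ (faces X (k-1)).card
            = ∑ _S ∈ (faces X (k-1)).powerset, ((faces X k).card + 1) := by
              rw [Finset.sum_const, smul_eq_mul, Finset.card_powerset, mul_comm]
          _ ≤ ∑ S ∈ (faces X (k-1)).powerset,
              2 * cnorm X k (fun τ => φ τ + cob X (k-1) (indicC S) τ) :=
            Finset.sum_le_sum hlb
          _ = (faces X k).card * 2 ^ (faces X (k-1)).card := hsum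
      have : 0 < 2 ^ (faces X (k-1)).card := by positivity
      nlinarith
    obtain ⟨S, _, hS⟩ := hkey
    exact le_trans (Nat.mul_le_mul_left 2 (Nat.sInf_le ⟨indicC S, rfl⟩)) hS


end Aux


lemma chernoff_contra (n m Vc : ℕ) (hn : 0 < n) (hm : 1 ≤ m)
    (L : ℝ) (hL : L = (1 - 20 * Real.sqrt ((m : ℝ) / (n : ℝ))) * ((n : ℝ) / 2))
    (hcount : (2 : ℝ) ^ n ≤ 2 ^ m * (Vc : ℝ))
    (hVc : ∀ x : ℝ, 0 < x → x ≤ 1 → (Vc : ℝ) * x ^ L ≤ (1 + x) ^ n) : False := by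
  have hn0 : (0 : ℝ) < (n : ℝ) := by exact_mod_cast hn
  have hm0 : (1 : ℝ) ≤ (m : ℝ) := by exact_mod_cast hm
  set q : ℝ := Real.sqrt ((m : ℝ) / (n : ℝ)) with hqdef
  have hqnn : 0 ≤ q := Real.sqrt_nonneg _
  have hq2 : q ^ 2 = (m : ℝ) / (n : ℝ) := Real.sq_sqrt (by positivity)
  have hnq2 : (n : ℝ) * q ^ 2 = (m : ℝ) := by
    rw [hq2]; field_simp
  set t : ℝ := 40 * q with htdef
  have ht0 : 0 ≤ t := by positivity
  set x : ℝ := Real.exp (-t) with hxdef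
  have hx0 : 0 < x := Real.exp_pos _
  have hx1 : x ≤ 1 := Real.exp_le_one_iff.2 (by linarith)
  have hxL : x ^ L = Real.exp (-t * L) := by
    rw [Real.rpow_def_of_pos hx0, hxdef, Real.log_exp]
  have h1x : 1 + x ≤ 2 * Real.exp (t ^ 2 / 8 - t / 2) := by
    have hsplit : Real.exp (-t / 2) * (Real.exp (t / 2) + Real.exp (-t / 2)) = 1 + x := by
      rw [mul_add, ← Real.exp_add, ← Real.exp_add, show -t / 2 + t / 2 = 0 by ring,
        show -t / 2 + -t / 2 = -t by ring, Real.exp_zero]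
    have hcosh : Real.exp (t / 2) + Real.exp (-t / 2) = 2 * Real.cosh (t / 2) := by
      rw [Real.cosh_eq]; ring
    have hch : Real.cosh (t / 2) ≤ Real.exp (t ^ 2 / 8) := by
      have := Real.cosh_le_exp_half_sq (t / 2)
      rwa [show (t / 2) ^ 2 / 2 = t ^ 2 / 8 by ring] at this
    calc 1 + x = Real.exp (-t / 2) * (2 * Real.cosh (t / 2)) := by rw [← hsplit, hcosh]
      _ ≤ Real.exp (-t / 2) * (2 * Real.exp (t ^ 2 / 8)) := by
          have := Real.exp_pos (-t / 2)
          nlinarith [hch, Real.exp_pos (-t/2)]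
      _ = 2 * Real.exp (t ^ 2 / 8 - t / 2) := by
          rw [show t ^ 2 / 8 - t / 2 = t ^ 2 / 8 + (-t / 2) by ring, Real.exp_add]; ring
  have hpow : (1 + x) ^ n ≤ 2 ^ n * Real.exp ((n : ℝ) * (t ^ 2 / 8 - t / 2)) := by
    calc (1 + x) ^ n ≤ (2 * Real.exp (t ^ 2 / 8 - t / 2)) ^ n :=
          pow_le_pow_left₀ (by positivity) h1x n
      _ = 2 ^ n * Real.exp ((n : ℝ) * (t ^ 2 / 8 - t / 2)) := by
          rw [mul_pow, ← Real.exp_nat_mul]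
  have hmain : (2 : ℝ) ^ n * Real.exp (-t * L) ≤
      2 ^ m * (2 ^ n * Real.exp ((n : ℝ) * (t ^ 2 / 8 - t / 2))) := by
    have h1 := hVc x hx0 hx1
    have hxLpos : 0 < x ^ L := Real.rpow_pos_of_pos hx0 _
    calc (2 : ℝ) ^ n * Real.exp (-t * L) = 2 ^ n * x ^ L := by rw [hxL]
      _ ≤ (2 ^ m * (Vc : ℝ)) * x ^ L := by
          apply mul_le_mul_of_nonneg_right hcount hxLpos.le
      _ = 2 ^ m * ((Vc : ℝ) * x ^ L) := by ring
      _ ≤ 2 ^ m * (1 + x) ^ n := by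
          apply mul_le_mul_of_nonneg_left h1 (by positivity)
      _ ≤ 2 ^ m * (2 ^ n * Real.exp ((n : ℝ) * (t ^ 2 / 8 - t / 2))) := by
          apply mul_le_mul_of_nonneg_left hpow (by positivity)
  have h2m : Real.exp ((m : ℝ) * Real.log 2) = (2 : ℝ) ^ m := by
    rw [Real.exp_nat_mul, Real.exp_log (by norm_num : (0:ℝ) < 2)]
  have h2npos : (0 : ℝ) < 2 ^ n := by positivity
  have hexp : Real.exp (-t * L) ≤ 2 ^ m * Real.exp ((n : ℝ) * (t ^ 2 / 8 - t / 2)) := by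
    rw [mul_left_comm] at hmain
    exact (mul_le_mul_iff_right₀ h2npos).1 hmain
  have hineq : -t * L ≤ (m : ℝ) * Real.log 2 + (n : ℝ) * (t ^ 2 / 8 - t / 2) := by
    exact Real.exp_le_exp.1 (by rwa [Real.exp_add, h2m])
  have hlog2 : Real.log 2 < 0.6931471808 := Real.log_two_lt_d9
  have hfinal : 400 * (m : ℝ) ≤ (m : ℝ) * Real.log 2 + 200 * (m : ℝ) := by
    have e1 : -t * L = -(20 * q * (n : ℝ)) + 400 * ((n : ℝ) * q ^ 2) := by
      rw [hL, htdef]; ring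
    have e2 : (n : ℝ) * (t ^ 2 / 8 - t / 2) = 200 * ((n : ℝ) * q ^ 2) - 20 * q * (n : ℝ) := by
      rw [htdef]; ring
    rw [e1, e2, hnq2] at hineq
    linarith
  nlinarith [hfinal, hlog2, hm0]

section Counting

variable {V : Type*} [DecidableEq V]

lemma indicC_mem_iff (T : Finset (Finset V)) (τ : Finset V) :
    indicC T τ ≠ 0 ↔ τ ∈ T := by
  by_cases h : τ ∈ T <;> simp [indicC, h]

lemma zmod2_recover (a b : ZMod 2) :
    a ≠ 0 ↔ ((b ≠ 0 ∧ ¬ (a + b ≠ 0)) ∨ ((a + b ≠ 0) ∧ ¬ b ≠ 0)) := by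
  revert a b; decide

lemma recover_symmDiff {X : Finset (Finset V)} {k : ℕ} {T : Finset (Finset V)}
    (hT : T ⊆ faces X k) (g : Finset V → ZMod 2) :
    T = symmDiff (csupp X k g) (csupp X k fun τ => indicC T τ + g τ) := by
  ext τ
  rw [Finset.mem_symmDiff]
  simp only [csupp, Finset.mem_filter]
  by_cases hτ : τ ∈ faces X k
  · simp only [hτ, true_and]
    rw [← indicC_mem_iff T τ]
    exact zmod2_recover _ _
  · have hτT : τ ∉ T := fun h => hτ (hT h)
    simp [hτ, hτT]

lemma csupp_indic {X : Finset (Finset V)} {k : ℕ} {T : Finset (Finset V)}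
    (hT : T ⊆ faces X k) : csupp X k (indicC T) = T := by
  ext τ
  simp only [csupp, Finset.mem_filter, indicC_mem_iff]
  exact ⟨fun h => h.2, fun h => ⟨hT h, h⟩⟩

lemma csupp_one_add {X : Finset (Finset V)} {k : ℕ} {T : Finset (Finset V)}
    (hT : T ⊆ faces X k) :
    csupp X k (fun σ => 1 + indicC T σ) = faces X k \ T := by
  ext τ
  simp only [csupp, Finset.mem_filter, Finset.mem_sdiff, zmod2_one_add, indicC_mem_iff]

lemma cob_eq_indic {X : Finset (Finset V)} {j : ℕ} (ψ : Finset V → ZMod 2) (τ : Finset V) :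
    cob X j ψ τ = cob X j (indicC ((faces X j).filter fun σ => ψ σ ≠ 0)) τ := by
  unfold cob
  apply Finset.sum_congr rfl
  intro σ hσ
  have hσf : σ ∈ faces X j := (Finset.mem_filter.1 hσ).1
  by_cases h : ψ σ = 0
  · simp [indicC, Finset.mem_filter, hσf, h]
  · have h1 : ψ σ = 1 := (zmod2_ne_zero_iff _).1 h
    simp [indicC, Finset.mem_filter, hσf, h, h1]

lemma count_pos {X : Finset (Finset V)} {k : ℕ} (hk : k ≠ 0) (L : ℝ)
    (hall : ∀ φ : Finset V → ZMod 2, (cosys X k φ : ℝ) < L)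
    [DecidablePred fun D : Finset (Finset V) => ((D.card : ℝ) < L)] :
    2 ^ (faces X k).card ≤ 2 ^ (faces X (k - 1)).card *
      ((faces X k).powerset.filter fun D => ((D.card : ℝ) < L)).card := by
  classical
  have hex : ∀ T : Finset (Finset V), ∃ ψ : Finset V → ZMod 2,
      cosys X k (indicC T) = cnorm X k (fun τ => indicC T τ + cob X (k - 1) ψ τ) := by
    intro T
    rw [cosys, if_neg hk]
    exact Nat.sInf_mem (s := {m | ∃ ψ : Finset V → ZMod 2,
      m = cnorm X k fun τ => indicC T τ + cob X (k - 1) ψ τ}) ⟨_, ⟨0, rfl⟩⟩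
  choose ψT hψT using hex
  let S : Finset (Finset V) → Finset (Finset V) :=
    fun T => (faces X (k - 1)).filter fun σ => ψT T σ ≠ 0
  let D : Finset (Finset V) → Finset (Finset V) :=
    fun T => csupp X k fun τ => indicC T τ + cob X (k - 1) (indicC (S T)) τ
  have hDcard : ∀ T, ((D T).card : ℝ) < L := by
    intro T
    have heq : (D T).card = cosys X k (indicC T) := by
      rw [hψT T]
      show (csupp X k _).card = (csupp X k _).card
      congr 1
      unfold csupp
      apply Finset.filter_congr
      intro τ _
      have hv : cob X (k - 1) (ψT T) τ = cob X (k - 1) (indicC (S T)) τ :=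
        cob_eq_indic (ψT T) τ
      simp only [hv]
    rw [heq]
    exact hall _
  have hcard := Finset.card_le_card_of_injOn (fun T => (S T, D T))
    (s := (faces X k).powerset)
    (t := (faces X (k - 1)).powerset ×ˢ
      ((faces X k).powerset.filter fun D' => ((D'.card : ℝ) < L)))
    (by
      intro T hT
      refine Finset.mem_product.2 ⟨Finset.mem_powerset.2 (Finset.filter_subset _ _), ?_⟩
      exact Finset.mem_filter.2 ⟨Finset.mem_powerset.2 (Finset.filter_subset _ _), hDcard T⟩)
    (by
      intro T1 h1 T2 h2 heq
      simp only [Prod.mk.injEq] at heq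
      have r1 := recover_symmDiff (Finset.mem_powerset.1 (Finset.mem_coe.1 h1))
        (cob X (k - 1) (indicC (S T1)))
      have r2 := recover_symmDiff (Finset.mem_powerset.1 (Finset.mem_coe.1 h2))
        (cob X (k - 1) (indicC (S T2)))
      rw [r1, r2]
      exact congrArg₂ symmDiff (by rw [heq.1]) heq.2)
  rwa [Finset.card_powerset, Finset.card_product, Finset.card_powerset] at hcard

lemma count_zero {X : Finset (Finset V)} (L : ℝ)
    (hall : ∀ φ : Finset V → ZMod 2, (cosys X 0 φ : ℝ) < L)
    [DecidablePred fun D : Finset (Finset V) => ((D.card : ℝ) < L)] :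
    2 ^ (faces X 0).card ≤
      2 * ((faces X 0).powerset.filter fun D => ((D.card : ℝ) < L)).card := by
  classical
  have hcard := Finset.card_le_card_of_injOn
    (s := (faces X 0).powerset)
    (fun T => if cnorm X 0 (indicC T) ≤ cnorm X 0 (fun σ => 1 + indicC T σ) then
        (true, csupp X 0 (indicC T)) else (false, csupp X 0 (fun σ => 1 + indicC T σ)))
    (t := (Finset.univ : Finset Bool) ×ˢ
      ((faces X 0).powerset.filter fun D' => ((D'.card : ℝ) < L)))
    (by
      intro T hT
      dsimp only
      have hco := hall (indicC T)
      rw [cosys, if_pos rfl] at hco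
      by_cases h : cnorm X 0 (indicC T) ≤ cnorm X 0 (fun σ => 1 + indicC T σ)
      · rw [if_pos h]
        refine Finset.mem_product.2 ⟨Finset.mem_univ _, Finset.mem_filter.2
          ⟨Finset.mem_powerset.2 (Finset.filter_subset _ _), ?_⟩⟩
        have : min (cnorm X 0 (indicC T)) (cnorm X 0 fun σ => 1 + indicC T σ)
            = cnorm X 0 (indicC T) := min_eq_left h
        rw [this] at hco
        exact hco
      · rw [if_neg h]
        refine Finset.mem_product.2 ⟨Finset.mem_univ _, Finset.mem_filter.2
          ⟨Finset.mem_powerset.2 (Finset.filter_subset _ _), ?_⟩⟩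
        have : min (cnorm X 0 (indicC T)) (cnorm X 0 fun σ => 1 + indicC T σ)
            = cnorm X 0 (fun σ => 1 + indicC T σ) := min_eq_right (le_of_not_ge h)
        rw [this] at hco
        exact hco)
    (by
      intro T1 h1 T2 h2 heq
      have hs1 := Finset.mem_powerset.1 (Finset.mem_coe.1 h1)
      have hs2 := Finset.mem_powerset.1 (Finset.mem_coe.1 h2)
      dsimp only at heq
      by_cases c1 : cnorm X 0 (indicC T1) ≤ cnorm X 0 (fun σ => 1 + indicC T1 σ) <;>
      by_cases c2 : cnorm X 0 (indicC T2) ≤ cnorm X 0 (fun σ => 1 + indicC T2 σ)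
      · rw [if_pos c1, if_pos c2, Prod.mk.injEq] at heq
        rw [← csupp_indic hs1, ← csupp_indic hs2]
        exact heq.2
      · rw [if_pos c1, if_neg c2, Prod.mk.injEq] at heq
        exact absurd heq.1 (by simp)
      · rw [if_neg c1, if_pos c2, Prod.mk.injEq] at heq
        exact absurd heq.1 (by simp)
      · rw [if_neg c1, if_neg c2, Prod.mk.injEq] at heq
        have h2 := heq.2
        rw [csupp_one_add hs1, csupp_one_add hs2] at h2
        rw [← Finset.sdiff_sdiff_eq_self hs1, ← Finset.sdiff_sdiff_eq_self hs2, h2])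
  rwa [Finset.card_powerset, Finset.card_product, Finset.card_univ, Fintype.card_bool]
    at hcard

end Counting

/-- **Bounds on the maximal cosystole**:
`(1 - 20√(f_{k-1}/f_k)) ⬝ f_k/2 ≤ λ_k(X) ≤ f_k/2`. -/
theorem maxCosys_bounds {V : Type*} [DecidableEq V]
    (X : Finset (Finset V)) (hX : IsComplex X) (k : ℕ)
    (hN : 0 < (faces X k).card) :
    (1 - 20 * Real.sqrt ((fPrev X k : ℝ) / ((faces X k).card : ℝ))) *
        (((faces X k).card : ℝ) / 2) ≤ (maxCosys X k : ℝ) ∧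
      (maxCosys X k : ℝ) ≤ ((faces X k).card : ℝ) / 2 := by
  classical
  have hSne : {m | ∃ φ : Finset V → ZMod 2, m = cosys X k φ}.Nonempty :=
    ⟨cosys X k (fun _ => 0), ⟨_, rfl⟩⟩
  have hbdd : BddAbove {m | ∃ φ : Finset V → ZMod 2, m = cosys X k φ} :=
    ⟨(faces X k).card, fun m hm => by obtain ⟨φ, rfl⟩ := hm; exact cosys_le_card X k φ⟩
  constructor
  · -- lower bound
    have hm1 : 1 ≤ fPrev X k := by
      rw [fPrev]; split_ifs with h
      · exact le_refl 1
      · obtain ⟨τ, hτ⟩ := Finset.card_pos.1 hN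
        obtain ⟨σ, hσ, _⟩ := exists_subface hX h hτ
        exact Finset.card_pos.2 ⟨σ, hσ⟩
    set L : ℝ := (1 - 20 * Real.sqrt ((fPrev X k : ℝ) / ((faces X k).card : ℝ))) *
        (((faces X k).card : ℝ) / 2) with hLdef
    by_contra hcon
    push_neg at hcon
    have hall : ∀ φ : Finset V → ZMod 2, (cosys X k φ : ℝ) < L := by
      intro φ
      have h1 : cosys X k φ ≤ maxCosys X k := le_csSup hbdd ⟨φ, rfl⟩
      calc (cosys X k φ : ℝ) ≤ (maxCosys X k : ℝ) := by exact_mod_cast h1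
        _ < L := hcon
    have hcount : 2 ^ (faces X k).card ≤ 2 ^ (fPrev X k) *
        ((faces X k).powerset.filter fun D => ((D.card : ℝ) < L)).card := by
      by_cases hk : k = 0
      · subst hk
        rw [fPrev, if_pos rfl, pow_one]
        exact count_zero L hall
      · rw [fPrev, if_neg hk]
        exact count_pos hk L hall
    have hVc : ∀ x : ℝ, 0 < x → x ≤ 1 →
        ((((faces X k).powerset.filter fun D => ((D.card : ℝ) < L)).card : ℝ)) * x ^ L
          ≤ (1 + x) ^ (faces X k).card := by
      intro x hx0 hx1
      calc ((((faces X k).powerset.filter fun D => ((D.card : ℝ) < L)).card : ℝ)) * x ^ L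
          = ∑ _D ∈ (faces X k).powerset.filter fun D => ((D.card : ℝ) < L), x ^ L := by
            rw [Finset.sum_const, nsmul_eq_mul]
        _ ≤ ∑ D ∈ (faces X k).powerset.filter (fun D => ((D.card : ℝ) < L)),
              x ^ (D.card : ℝ) :=
            Finset.sum_le_sum (fun D hD => Real.rpow_le_rpow_of_exponent_ge hx0 hx1
              (le_of_lt (Finset.mem_filter.1 hD).2))
        _ ≤ ∑ D ∈ (faces X k).powerset, x ^ (D.card : ℝ) :=
            Finset.sum_le_sum_of_subset_of_nonneg (Finset.filter_subset _ _)
              (fun D _ _ => (Real.rpow_pos_of_pos hx0 _).le)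
        _ = ∑ D ∈ (faces X k).powerset, x ^ D.card :=
            Finset.sum_congr rfl fun D _ => Real.rpow_natCast x D.card
        _ = (1 + x) ^ (faces X k).card := by
            have hpa := Finset.prod_add (fun _ : Finset V => x) (fun _ : Finset V => (1 : ℝ))
              (faces X k)
            simp only [Finset.prod_const, one_pow, mul_one] at hpa
            rw [add_comm (1 : ℝ) x]
            exact hpa.symm
    exact chernoff_contra (faces X k).card (fPrev X k) _ hN hm1 L hLdef
      (by exact_mod_cast hcount) hVc
  · -- upper bound
    obtain ⟨φ0, h0⟩ := Nat.sSup_mem hSne hbdd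
    have hmc : maxCosys X k = cosys X k φ0 := h0
    rw [hmc]
    have h2 := two_mul_cosys_le hX k φ0
    have h2r : 2 * ((cosys X k φ0 : ℝ)) ≤ ((faces X k).card : ℝ) := by exact_mod_cast h2
    linarith
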